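/- The projection π₁ : Z → H from the incidence set Z = {(K, x) ∈ H × X : x ∈ K} to the Hausdorff space H is an open map. -/
import Mathlib


open TopologicalSpace

theorem stmt1 (X : Type*) [MetricSpace X] :
    IsOpenMap (fun z : {p : NonemptyCompacts X × X // p.2 ∈ (p.1 : Set X)} => z.1.1) := by
  intro U hU
  rw [Metric.isOpen_iff]
  rintro K ⟨⟨⟨K', x⟩, hx⟩, hU', rfl⟩
  obtain ⟨ε, hε, hball⟩ := Metric.isOpen_iff.mp hU ⟨(K', x), hx⟩ hU'
  refine ⟨ε, hε, ?_⟩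
  intro L hL
  have hne : EMetric.hausdorffEdist (K' : Set X) (L : Set X) ≠ ⊤ :=
    Metric.hausdorffEdist_ne_top_of_nonempty_of_bounded K'.nonempty L.nonempty
      K'.isCompact.isBounded L.isCompact.isBounded
  have h1 : Metric.infDist x (L : Set X) ≤ dist L K' := by
    rw [dist_comm, Metric.NonemptyCompacts.dist_eq]
    exact Metric.infDist_le_hausdorffDist_of_mem hx hne
  obtain ⟨y, hy, hyd⟩ := L.isCompact.exists_infDist_eq_dist L.nonempty x
  have hdy : dist y x < ε := by
    rw [dist_comm, ← hyd]; exact lt_of_le_of_lt h1 hL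
  refine ⟨⟨(L, y), hy⟩, hball ?_, rfl⟩
  rw [Metric.mem_ball]
  have : dist (⟨(L, y), hy⟩ : {p : NonemptyCompacts X × X // p.2 ∈ (p.1 : Set X)})
      ⟨(K', x), hx⟩ = max (dist L K') (dist y x) := rfl
  rw [this]
  exact max_lt hL hdy
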